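/- For every n ∈ ℕ, both spending constraints hold: P_α(τ ≤ n, S_τ ≥ U_τ) ≤ ε_n and P_α(τ ≤ n, S_τ ≤ L_τ) ≤ ε_n. -/

import Mathlib

open MeasureTheory ProbabilityTheory Filter Asymptotics
open scoped ENNReal

namespace SeqMC

variable {Ω : Type*} [MeasurableSpace Ω]

/-- Partial sums: `S n = X_1 + ⋯ + X_n`, where the i-th variable `X_i` is `X (i-1)`. -/
def S (X : ℕ → Ω → ℕ) (n : ℕ) (ω : Ω) : ℕ := ∑ i ∈ Finset.range n, X i ω

/-- `X` is an i.i.d. Bernoulli(p) sequence under the probability measure `P`. -/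
structure IsBernoulliSeq (P : Measure Ω) (p : ℝ) (X : ℕ → Ω → ℕ) : Prop where
  isProb : IsProbabilityMeasure P
  meas : ∀ i, Measurable (X i)
  bdd : ∀ i ω, X i ω ≤ 1
  indep : iIndepFun X P
  bern : ∀ i, P (X i ⁻¹' {1}) = ENNReal.ofReal p

/-- The walk stayed strictly between the boundaries at all steps `1 ≤ k ≤ n`, i.e. `τ > n`. -/
def notStopped (X : ℕ → Ω → ℕ) (U L : ℕ → ℤ) (n : ℕ) (ω : Ω) : Prop :=
  ∀ k, 1 ≤ k → k ≤ n → L k < (S X k ω : ℤ) ∧ (S X k ω : ℤ) < U k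

/-- The event `τ ≤ n` and `S_τ ≥ U_τ`. -/
def hitUpperBy (X : ℕ → Ω → ℕ) (U L : ℕ → ℤ) (n : ℕ) (ω : Ω) : Prop :=
  ∃ k, 1 ≤ k ∧ k ≤ n ∧ notStopped X U L (k - 1) ω ∧ U k ≤ (S X k ω : ℤ)

/-- The event `τ ≤ n` and `S_τ ≤ L_τ`. -/
def hitLowerBy (X : ℕ → Ω → ℕ) (U L : ℕ → ℤ) (n : ℕ) (ω : Ω) : Prop :=
  ∃ k, 1 ≤ k ∧ k ≤ n ∧ notStopped X U L (k - 1) ω ∧ (S X k ω : ℤ) ≤ L k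

/-- The recursively defined boundaries `(U_n, L_n)`: `U_1 = 2`, `L_1 = -1` and for `n ≥ 2`,
`U_n` is the least `j ∈ {1,2,…}` with `P_α(τ ≥ n, S_n ≥ j) + P_α(τ < n, S_τ ≥ U_τ) ≤ ε_n`,
`L_n` is the greatest `j ∈ ℤ` with `P_α(τ ≥ n, S_n ≤ j) + P_α(τ < n, S_τ ≤ L_τ) ≤ ε_n`.
Here `Pα` is the measure `P_α` and `εs` the spending sequence. -/
noncomputable def bnd (Pα : Measure Ω) (X : ℕ → Ω → ℕ) (εs : ℕ → ℝ) : ℕ → ℤ × ℤ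
  | 0 => (2, -1)
  | 1 => (2, -1)
  | n + 2 =>
      let U : ℕ → ℤ := fun k => if h : k < n + 2 then (bnd Pα X εs k).1 else 0
      let L : ℕ → ℤ := fun k => if h : k < n + 2 then (bnd Pα X εs k).2 else 0
      (sInf {j : ℤ | 1 ≤ j ∧
          Pα {ω | notStopped X U L (n + 1) ω ∧ j ≤ (S X (n + 2) ω : ℤ)} +
            Pα {ω | hitUpperBy X U L (n + 1) ω} ≤ ENNReal.ofReal (εs (n + 2))},
       sSup {j : ℤ |
          Pα {ω | notStopped X U L (n + 1) ω ∧ (S X (n + 2) ω : ℤ) ≤ j} +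
            Pα {ω | hitLowerBy X U L (n + 1) ω} ≤ ENNReal.ofReal (εs (n + 2))})
  termination_by n => n
  decreasing_by all_goals omega

/-- The upper boundary `U_n`. -/
noncomputable def Ub (Pα : Measure Ω) (X : ℕ → Ω → ℕ) (εs : ℕ → ℝ) (n : ℕ) : ℤ :=
  (bnd Pα X εs n).1

/-- The lower boundary `L_n`. -/
noncomputable def Lb (Pα : Measure Ω) (X : ℕ → Ω → ℕ) (εs : ℕ → ℝ) (n : ℕ) : ℤ :=
  (bnd Pα X εs n).2

/-- The stopping time `τ = inf {k ≥ 1 : S_k ≥ U_k or S_k ≤ L_k}`, with `0` encoding `τ = ∞`. -/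
noncomputable def tau (Pα : Measure Ω) (X : ℕ → Ω → ℕ) (εs : ℕ → ℝ) (ω : Ω) : ℕ :=
  sInf {k | 1 ≤ k ∧ ((S X k ω : ℤ) ≤ Lb Pα X εs k ∨ Ub Pα X εs k ≤ (S X k ω : ℤ))}

/-- `τ` as an extended nonneg real (`∞` when the algorithm never stops). -/
noncomputable def tauE (Pα : Measure Ω) (X : ℕ → Ω → ℕ) (εs : ℕ → ℝ) (ω : Ω) : ℝ≥0∞ :=
  if tau Pα X εs ω = 0 then ⊤ else (tau Pα X εs ω : ℝ≥0∞)

/-- The event `τ < ∞` and `S_τ ≥ U_τ`. -/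
def hitsUpper (Pα : Measure Ω) (X : ℕ → Ω → ℕ) (εs : ℕ → ℝ) (ω : Ω) : Prop :=
  tau Pα X εs ω ≠ 0 ∧ Ub Pα X εs (tau Pα X εs ω) ≤ (S X (tau Pα X εs ω) ω : ℤ)

/-- The event `τ < ∞` and `S_τ ≤ L_τ`. -/
def hitsLower (Pα : Measure Ω) (X : ℕ → Ω → ℕ) (εs : ℕ → ℝ) (ω : Ω) : Prop :=
  tau Pα X εs ω ≠ 0 ∧ (S X (tau Pα X εs ω) ω : ℤ) ≤ Lb Pα X εs (tau Pα X εs ω)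

/-- The estimator `p̂ = S_τ/τ` (`= α` if `τ = ∞`). -/
noncomputable def phat (Pα : Measure Ω) (X : ℕ → Ω → ℕ) (εs : ℕ → ℝ) (α : ℝ) (ω : Ω) : ℝ :=
  if tau Pα X εs ω = 0 then α
  else (S X (tau Pα X εs ω) ω : ℝ) / (tau Pα X εs ω)

lemma S_le_of_bdd {X : ℕ → Ω → ℕ} (hbdd : ∀ i ω, X i ω ≤ 1) (n : ℕ) (ω : Ω) :
    S X n ω ≤ n := by
  calc S X n ω ≤ ∑ _i ∈ Finset.range n, 1 :=
        Finset.sum_le_sum fun i _ => hbdd i ω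
    _ = n := by simp

lemma notStopped_congr (X : ℕ → Ω → ℕ) {U L U' L' : ℕ → ℤ} {n : ℕ} {ω : Ω}
    (hU : ∀ k, k ≤ n → U k = U' k) (hL : ∀ k, k ≤ n → L k = L' k) :
    notStopped X U L n ω ↔ notStopped X U' L' n ω := by
  constructor <;> intro h k hk1 hk2 <;> have h' := h k hk1 hk2
  · rwa [hU k hk2, hL k hk2] at h'
  · rwa [hU k hk2, hL k hk2]

lemma hitUpperBy_congr (X : ℕ → Ω → ℕ) {U L U' L' : ℕ → ℤ} {n : ℕ} {ω : Ω}
    (hU : ∀ k, k ≤ n → U k = U' k) (hL : ∀ k, k ≤ n → L k = L' k) :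
    hitUpperBy X U L n ω ↔ hitUpperBy X U' L' n ω := by
  constructor <;> rintro ⟨k, hk1, hk2, hns, hS⟩ <;> refine ⟨k, hk1, hk2, ?_, ?_⟩
  · exact (notStopped_congr X (fun j hj => hU j (by omega)) (fun j hj => hL j (by omega))).1 hns
  · rwa [← hU k hk2]
  · exact (notStopped_congr X (fun j hj => hU j (by omega)) (fun j hj => hL j (by omega))).2 hns
  · rwa [hU k hk2]

lemma hitLowerBy_congr (X : ℕ → Ω → ℕ) {U L U' L' : ℕ → ℤ} {n : ℕ} {ω : Ω}
    (hU : ∀ k, k ≤ n → U k = U' k) (hL : ∀ k, k ≤ n → L k = L' k) :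
    hitLowerBy X U L n ω ↔ hitLowerBy X U' L' n ω := by
  constructor <;> rintro ⟨k, hk1, hk2, hns, hS⟩ <;> refine ⟨k, hk1, hk2, ?_, ?_⟩
  · exact (notStopped_congr X (fun j hj => hU j (by omega)) (fun j hj => hL j (by omega))).1 hns
  · rwa [← hL k hk2]
  · exact (notStopped_congr X (fun j hj => hU j (by omega)) (fun j hj => hL j (by omega))).2 hns
  · rwa [hL k hk2]

lemma bnd_succ_succ (Pα : Measure Ω) (X : ℕ → Ω → ℕ) (εs : ℕ → ℝ) (n : ℕ) :
    bnd Pα X εs (n + 2) =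
      (sInf {j : ℤ | 1 ≤ j ∧
          Pα {ω | notStopped X (Ub Pα X εs) (Lb Pα X εs) (n + 1) ω ∧ j ≤ (S X (n + 2) ω : ℤ)} +
            Pα {ω | hitUpperBy X (Ub Pα X εs) (Lb Pα X εs) (n + 1) ω} ≤
              ENNReal.ofReal (εs (n + 2))},
       sSup {j : ℤ |
          Pα {ω | notStopped X (Ub Pα X εs) (Lb Pα X εs) (n + 1) ω ∧ (S X (n + 2) ω : ℤ) ≤ j} +
            Pα {ω | hitLowerBy X (Ub Pα X εs) (Lb Pα X εs) (n + 1) ω} ≤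
              ENNReal.ofReal (εs (n + 2))}) := by
  rw [bnd]
  have hU : ∀ k, k ≤ n + 1 →
      (fun k => if _h : k < n + 2 then (bnd Pα X εs k).1 else 0) k = Ub Pα X εs k := by
    intro k hk; simp only [dif_pos (by omega : k < n + 2)]; rfl
  have hL : ∀ k, k ≤ n + 1 →
      (fun k => if _h : k < n + 2 then (bnd Pα X εs k).2 else 0) k = Lb Pα X εs k := by
    intro k hk; simp only [dif_pos (by omega : k < n + 2)]; rfl
  congr 1
  · congr 1
    ext j
    simp only [Set.mem_setOf_eq]
    constructor <;> rintro ⟨h1, h2⟩ <;> refine ⟨h1, ?_⟩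
    · convert h2 using 3
      · ext ω; simp only [Set.mem_setOf_eq]
        exact and_congr_left fun _ => (notStopped_congr X hU hL).symm
      · ext ω; exact (hitUpperBy_congr X hU hL).symm
    · convert h2 using 3
      · ext ω; simp only [Set.mem_setOf_eq]
        exact and_congr_left fun _ => notStopped_congr X hU hL
      · ext ω; exact hitUpperBy_congr X hU hL
  · congr 1
    ext j
    simp only [Set.mem_setOf_eq]
    constructor <;> intro h2
    · convert h2 using 3
      · ext ω; simp only [Set.mem_setOf_eq]
        exact and_congr_left fun _ => (notStopped_congr X hU hL).symm
      · ext ω; exact (hitLowerBy_congr X hU hL).symm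
    · convert h2 using 3
      · ext ω; simp only [Set.mem_setOf_eq]
        exact and_congr_left fun _ => notStopped_congr X hU hL
      · ext ω; exact hitLowerBy_congr X hU hL

lemma bnd_one (Pα : Measure Ω) (X : ℕ → Ω → ℕ) (εs : ℕ → ℝ) :
    bnd Pα X εs 1 = (2, -1) := by rw [bnd]

theorem statement_7 {Ω : Type*} [MeasurableSpace Ω]
    (α ε : ℝ) (hα : α ∈ Set.Ioo (0:ℝ) 1) (hε : ε ∈ Set.Ioo (0:ℝ) 1)
    (εs : ℕ → ℝ) (hεs0 : εs 0 = 0) (hmono : Monotone εs)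
    (hnonneg : ∀ n, 0 ≤ εs n) (hlt : ∀ n, εs n < ε)
    (hlim : Filter.Tendsto εs Filter.atTop (nhds ε))
    (P : ℝ → Measure Ω) (X : ℕ → Ω → ℕ)
    (hBern : ∀ p ∈ Set.Icc (0:ℝ) 1, IsBernoulliSeq (P p) p X) :
    ∀ n : ℕ, 1 ≤ n →
      P α {ω | hitUpperBy X (Ub (P α) X εs) (Lb (P α) X εs) n ω} ≤ ENNReal.ofReal (εs n) ∧
        P α {ω | hitLowerBy X (Ub (P α) X εs) (Lb (P α) X εs) n ω} ≤ ENNReal.ofReal (εs n) := by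
  set Pα := P α with hPα
  have hbdd : ∀ i ω, X i ω ≤ 1 :=
    (hBern α ⟨le_of_lt hα.1, le_of_lt hα.2⟩).bdd
  set Uf := Ub Pα X εs with hUf
  set Lf := Lb Pα X εs with hLf
  have key : ∀ m : ℕ,
      Pα {ω | hitUpperBy X Uf Lf (m + 1) ω} ≤ ENNReal.ofReal (εs (m + 1)) ∧
      Pα {ω | hitLowerBy X Uf Lf (m + 1) ω} ≤ ENNReal.ofReal (εs (m + 1)) := by
    intro m
    induction m with
    | zero =>
      constructor
      · have : {ω | hitUpperBy X Uf Lf 1 ω} = ∅ := by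
          ext ω
          simp only [Set.mem_setOf_eq, Set.mem_empty_iff_false, iff_false]
          rintro ⟨k, hk1, hk2, _, hS⟩
          have hk : k = 1 := by omega
          subst hk
          have hU1 : Uf 1 = 2 := by
            rw [hUf, Ub, bnd_one]
          rw [hU1] at hS
          have h1 : S X 1 ω ≤ 1 := S_le_of_bdd hbdd 1 ω
          have : (S X 1 ω : ℤ) ≤ 1 := by exact_mod_cast h1
          omega
        rw [this]; simp
      · have : {ω | hitLowerBy X Uf Lf 1 ω} = ∅ := by
          ext ω
          simp only [Set.mem_setOf_eq, Set.mem_empty_iff_false, iff_false]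
          rintro ⟨k, hk1, hk2, _, hS⟩
          have hk : k = 1 := by omega
          subst hk
          have hL1 : Lf 1 = -1 := by
            rw [hLf, Lb, bnd_one]
          rw [hL1] at hS
          have : (0 : ℤ) ≤ (S X 1 ω : ℤ) := Int.natCast_nonneg _
          omega
        rw [this]; simp
    | succ n IH =>
      obtain ⟨IHU, IHL⟩ := IH
      have hεstep : ENNReal.ofReal (εs (n + 1)) ≤ ENNReal.ofReal (εs (n + 2)) :=
        ENNReal.ofReal_le_ofReal (hmono (by omega))
      have hScast : ∀ ω, (S X (n + 2) ω : ℤ) ≤ (n + 2 : ℤ) := by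
        intro ω
        exact_mod_cast S_le_of_bdd hbdd (n + 2) ω
      -- the upper boundary set
      set TU : Set ℤ := {j : ℤ | 1 ≤ j ∧
          Pα {ω | notStopped X Uf Lf (n + 1) ω ∧ j ≤ (S X (n + 2) ω : ℤ)} +
            Pα {ω | hitUpperBy X Uf Lf (n + 1) ω} ≤ ENNReal.ofReal (εs (n + 2))} with hTU
      set TL : Set ℤ := {j : ℤ |
          Pα {ω | notStopped X Uf Lf (n + 1) ω ∧ (S X (n + 2) ω : ℤ) ≤ j} +
            Pα {ω | hitLowerBy X Uf Lf (n + 1) ω} ≤ ENNReal.ofReal (εs (n + 2))} with hTL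
      have hUval : Uf (n + 2) = sInf TU := by
        rw [hUf, Ub, bnd_succ_succ]
      have hLval : Lf (n + 2) = sSup TL := by
        rw [hLf, Lb, bnd_succ_succ]
      -- membership of the chosen boundaries
      have hTUne : ((n + 3 : ℤ)) ∈ TU := by
        refine ⟨by omega, ?_⟩
        have hempty : {ω | notStopped X Uf Lf (n + 1) ω ∧ (n + 3 : ℤ) ≤ (S X (n + 2) ω : ℤ)}
            = ∅ := by
          ext ω
          simp only [Set.mem_setOf_eq, Set.mem_empty_iff_false, iff_false]
          rintro ⟨_, h⟩
          have := hScast ω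
          omega
        rw [hempty, measure_empty, zero_add]
        exact le_trans IHU hεstep
      have hUmem : sInf TU ∈ TU := by
        apply Int.csInf_mem ⟨_, hTUne⟩
        exact ⟨1, fun j hj => hj.1⟩
      have hTLdc : ∀ j j' : ℤ, j ≤ j' → j' ∈ TL → j ∈ TL := by
        intro j j' hle hj'
        refine le_trans (add_le_add (measure_mono ?_) le_rfl) hj'
        rintro ω ⟨h1, h2⟩
        exact ⟨h1, by omega⟩
      have hTLne : (-1 : ℤ) ∈ TL := by
        have hempty : {ω | notStopped X Uf Lf (n + 1) ω ∧ (S X (n + 2) ω : ℤ) ≤ (-1 : ℤ)}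
            = ∅ := by
          ext ω
          simp only [Set.mem_setOf_eq, Set.mem_empty_iff_false, iff_false]
          rintro ⟨_, h⟩
          have : (0 : ℤ) ≤ (S X (n + 2) ω : ℤ) := Int.natCast_nonneg _
          omega
        show Pα _ + Pα _ ≤ _
        rw [hempty, measure_empty, zero_add]
        exact le_trans IHL hεstep
      have hLmem : sSup TL ∈ TL := by
        by_cases hb : BddAbove TL
        · exact Int.csSup_mem ⟨_, hTLne⟩ hb
        · have : ∀ j : ℤ, j ∈ TL := by
            intro j
            rw [bddAbove_def] at hb
            push_neg at hb
            obtain ⟨x, hx, hlt'⟩ := hb j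
            exact hTLdc j x (le_of_lt hlt') hx
          exact this _
      -- decompose the events at time n+2
      have hsplitU : {ω | hitUpperBy X Uf Lf (n + 2) ω} ⊆
          {ω | notStopped X Uf Lf (n + 1) ω ∧ Uf (n + 2) ≤ (S X (n + 2) ω : ℤ)} ∪
            {ω | hitUpperBy X Uf Lf (n + 1) ω} := by
        rintro ω ⟨k, hk1, hk2, hns, hS⟩
        rcases Nat.lt_or_ge k (n + 2) with hk | hk
        · exact Or.inr ⟨k, hk1, by omega, hns, hS⟩
        · have hkk : k = n + 2 := by omega
          subst hkk
          exact Or.inl ⟨hns, hS⟩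
      have hsplitL : {ω | hitLowerBy X Uf Lf (n + 2) ω} ⊆
          {ω | notStopped X Uf Lf (n + 1) ω ∧ (S X (n + 2) ω : ℤ) ≤ Lf (n + 2)} ∪
            {ω | hitLowerBy X Uf Lf (n + 1) ω} := by
        rintro ω ⟨k, hk1, hk2, hns, hS⟩
        rcases Nat.lt_or_ge k (n + 2) with hk | hk
        · exact Or.inr ⟨k, hk1, by omega, hns, hS⟩
        · have hkk : k = n + 2 := by omega
          subst hkk
          exact Or.inl ⟨hns, hS⟩
      constructor
      · calc Pα {ω | hitUpperBy X Uf Lf (n + 2) ω}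
            ≤ Pα ({ω | notStopped X Uf Lf (n + 1) ω ∧ Uf (n + 2) ≤ (S X (n + 2) ω : ℤ)} ∪
                {ω | hitUpperBy X Uf Lf (n + 1) ω}) := measure_mono hsplitU
          _ ≤ Pα {ω | notStopped X Uf Lf (n + 1) ω ∧ Uf (n + 2) ≤ (S X (n + 2) ω : ℤ)} +
                Pα {ω | hitUpperBy X Uf Lf (n + 1) ω} := measure_union_le _ _
          _ ≤ ENNReal.ofReal (εs (n + 2)) := by rw [hUval]; exact hUmem.2
      · calc Pα {ω | hitLowerBy X Uf Lf (n + 2) ω}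
            ≤ Pα ({ω | notStopped X Uf Lf (n + 1) ω ∧ (S X (n + 2) ω : ℤ) ≤ Lf (n + 2)} ∪
                {ω | hitLowerBy X Uf Lf (n + 1) ω}) := measure_mono hsplitL
          _ ≤ Pα {ω | notStopped X Uf Lf (n + 1) ω ∧ (S X (n + 2) ω : ℤ) ≤ Lf (n + 2)} +
                Pα {ω | hitLowerBy X Uf Lf (n + 1) ω} := measure_union_le _ _
          _ ≤ ENNReal.ofReal (εs (n + 2)) := by rw [hLval]; exact hLmem
  intro n hn
  obtain ⟨m, rfl⟩ : ∃ m, n = m + 1 := ⟨n - 1, by omega⟩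
  exact key m

end SeqMC
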